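/- Let p ∈ ℝ[z_1,...,z_m] be real stable and let z ∈ ℝ^m be above all roots of p. Then for all i, j ≤ m, the partial derivatives of the barrier functions at z satisfy ∂_{z_i} Ψ^j_p(z) ≥ 2·Φ^j_p(z) · ∂_{z_i} Φ^j_p(z); equivalently, since ∂_{z_i} Φ^j_p(z) ≤ 0, whenever ∂_{z_i} Φ^j_p(z) ≠ 0 one has (∂_{z_i} Ψ^j_p(z)) / (∂_{z_i} Φ^j_p(z)) ≤ 2·Φ^j_p(z). -/

import Mathlib

noncomputable section

open Polynomial Filter Complex

/-- A polynomial `p ∈ ℝ[z_1,...,z_m]` is real stable if it has no root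
`(z_1,...,z_m) ∈ ℂ^m` with `Im(z_i) > 0` for every `i`. -/
def RealStable {m : ℕ} (p : MvPolynomial (Fin m) ℝ) : Prop :=
  ∀ z : Fin m → ℂ, (∀ i, 0 < (z i).im) → (MvPolynomial.aeval z) p ≠ 0

/-- `z ∈ ℝ^m` is above all roots of `p` if `p(z + t) > 0` for every `t ≥ 0`. -/
def AboveRoots {m : ℕ} (p : MvPolynomial (Fin m) ℝ) (z : Fin m → ℝ) : Prop :=
  ∀ t : Fin m → ℝ, (∀ i, 0 ≤ t i) → 0 < MvPolynomial.eval (z + t) p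

/-- The barrier function `Φ^j_p(z) = (∂_{z_j} p)(z) / p(z)`. -/
def Phi {m : ℕ} (p : MvPolynomial (Fin m) ℝ) (j : Fin m) (z : Fin m → ℝ) : ℝ :=
  MvPolynomial.eval z (MvPolynomial.pderiv j p) / MvPolynomial.eval z p

/-- The partial derivative `∂_{z_i} Φ^j_p(z)` of the barrier function, as the rational
function `((∂_i ∂_j p)·p − (∂_j p)·(∂_i p)) / p²` evaluated at `z`. -/
def dPhi {m : ℕ} (p : MvPolynomial (Fin m) ℝ) (i j : Fin m) (z : Fin m → ℝ) : ℝ :=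
  (MvPolynomial.eval z (MvPolynomial.pderiv i (MvPolynomial.pderiv j p)) *
      MvPolynomial.eval z p -
    MvPolynomial.eval z (MvPolynomial.pderiv j p) *
      MvPolynomial.eval z (MvPolynomial.pderiv i p)) /
    (MvPolynomial.eval z p) ^ 2

/-- The partial derivative `∂_{z_i} Ψ^j_p(z)` of the second-order barrier function
`Ψ^j_p = (∂²_{z_j} p)/p`, as the rational function
`((∂_i ∂²_j p)·p − (∂²_j p)·(∂_i p)) / p²` evaluated at `z`. -/
def dPsi {m : ℕ} (p : MvPolynomial (Fin m) ℝ) (i j : Fin m) (z : Fin m → ℝ) : ℝ :=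
  (MvPolynomial.eval z
        (MvPolynomial.pderiv i (MvPolynomial.pderiv j (MvPolynomial.pderiv j p))) *
      MvPolynomial.eval z p -
    MvPolynomial.eval z (MvPolynomial.pderiv j (MvPolynomial.pderiv j p)) *
      MvPolynomial.eval z (MvPolynomial.pderiv i p)) /
    (MvPolynomial.eval z p) ^ 2

namespace KS


variable {m : ℕ}

lemma genHom {S T : Type*} [CommSemiring S] [CommSemiring T] [Algebra ℝ S] [Algebra ℝ T]
    (φ : S →+* T) (hφ : ∀ r : ℝ, φ (algebraMap ℝ S r) = algebraMap ℝ T r)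
    (σ : Fin m → S) (q : MvPolynomial (Fin m) ℝ) :
    φ (MvPolynomial.aeval σ q) = MvPolynomial.aeval (fun k => φ (σ k)) q := by
  induction q using MvPolynomial.induction_on with
  | C a => simp [MvPolynomial.aeval_C, hφ]
  | add p q hp hq => simp [map_add, hp, hq]
  | mul_X p n hp => simp [map_mul, hp]

lemma contMv (q : MvPolynomial (Fin m) ℝ) :
    Continuous fun w : Fin m → ℂ => (MvPolynomial.aeval w q : ℂ) := by
  induction q using MvPolynomial.induction_on with
  | C a => simpa using continuous_const
  | add p q hp hq =>
      simp only [map_add]; exact hp.add hq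
  | mul_X p n hp =>
      simp only [map_mul, MvPolynomial.aeval_X]; exact hp.mul (continuous_apply n)

lemma derivAeval (q : MvPolynomial (Fin m) ℝ) (a : Fin m → ℂ) (i₀ : Fin m) :
    Polynomial.derivative
        (MvPolynomial.aeval (fun k => Polynomial.C (a k) + (if k = i₀ then Polynomial.X else 0)) q)
      = MvPolynomial.aeval (fun k => Polynomial.C (a k) + (if k = i₀ then Polynomial.X else 0))
          (MvPolynomial.pderiv i₀ q) := by
  induction q using MvPolynomial.induction_on with
  | C r => simp [MvPolynomial.aeval_C, MvPolynomial.pderiv_C]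
  | add p q hp hq => simp [map_add, hp, hq]
  | mul_X p n hp =>
      rw [map_mul, MvPolynomial.aeval_X, Polynomial.derivative_mul, hp,
        MvPolynomial.pderiv_mul]
      by_cases h : n = i₀
      · subst h; simp [MvPolynomial.pderiv_X_self]
      · simp [h, MvPolynomial.pderiv_X_of_ne h]

-- real points
lemma aevalReal (q : MvPolynomial (Fin m) ℝ) (w : Fin m → ℝ) :
    MvPolynomial.aeval (fun k => ((w k : ℝ) : ℂ)) q = ((MvPolynomial.eval w q : ℝ) : ℂ) := by
  induction q using MvPolynomial.induction_on with
  | C a => simp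
  | add p q hp hq => simp [map_add, hp, hq]
  | mul_X p n hp => simp [map_mul, hp]

-- conjugation
lemma aevalConj (q : MvPolynomial (Fin m) ℝ) (w : Fin m → ℂ) :
    (starRingEnd ℂ) (MvPolynomial.aeval w q) = MvPolynomial.aeval (fun k => (starRingEnd ℂ) (w k)) q := by
  induction q using MvPolynomial.induction_on with
  | C a => simp [MvPolynomial.aeval_C]
  | add p q hp hq => simp [map_add, hp, hq]
  | mul_X p n hp => simp [map_mul, hp]



lemma normProd (s : Multiset ℂ) : ‖s.prod‖ = (s.map (fun z => ‖z‖)).prod := by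
  induction s using Multiset.induction_on with
  | empty => simp
  | cons a s ih => simp [norm_mul, ih]

lemma prodMapLe {s : Multiset ℂ} {f g : ℂ → ℝ} (h0 : ∀ a ∈ s, 0 ≤ f a)
    (hle : ∀ a ∈ s, f a ≤ g a) : (s.map f).prod ≤ (s.map g).prod := by
  induction s using Multiset.induction_on with
  | empty => simp
  | cons a s ih =>
      simp only [Multiset.map_cons, Multiset.prod_cons]
      have h1 : 0 ≤ (s.map f).prod := Multiset.prod_nonneg (by
        intro x hx; obtain ⟨b, hb, rfl⟩ := Multiset.mem_map.mp hx
        exact h0 b (Multiset.mem_cons_of_mem hb))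
      have h2 : 0 ≤ f a := h0 a (Multiset.mem_cons_self a s)
      have h3 := ih (fun b hb => h0 b (Multiset.mem_cons_of_mem hb))
        (fun b hb => hle b (Multiset.mem_cons_of_mem hb))
      have h4 := hle a (Multiset.mem_cons_self a s)
      nlinarith [Multiset.prod_nonneg (show ∀ x ∈ s.map g, (0:ℝ) ≤ x from by
        intro x hx; obtain ⟨b, hb, rfl⟩ := Multiset.mem_map.mp hx
        exact le_trans (h0 b (Multiset.mem_cons_of_mem hb)) (hle b (Multiset.mem_cons_of_mem hb)))]

lemma prodMapConstMul (s : Multiset ℂ) (k : ℝ) (g : ℂ → ℝ) :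
    (s.map (fun a => k * g a)).prod = k ^ Multiset.card s * (s.map g).prod := by
  induction s using Multiset.induction_on with
  | empty => simp
  | cons a s ih => simp [ih, pow_succ]; ring

lemma evalRoots (f : Polynomial ℂ) (y : ℂ) :
    f.eval y = f.leadingCoeff * ((f.roots.map fun a => y - a)).prod := by
  conv_lhs => rw [(IsAlgClosed.splits f).eq_prod_roots]
  rw [eval_mul, eval_C, eval_multiset_prod, Multiset.map_map]
  simp [Function.comp_def]

lemma normEvalRoots (f : Polynomial ℂ) (y : ℂ) :
    ‖f.eval y‖ = ‖f.leadingCoeff‖ * ((f.roots.map fun a => ‖y - a‖)).prod := by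
  rw [evalRoots f y, norm_mul, normProd, Multiset.map_map]; rfl

/-- two-point comparison: if all roots are `δ`-far from `y₀` and `y₁` is `δ/2`-close
to `y₀`, then `‖f y₁‖ ≤ (3/2)^D ‖f y₀‖`. -/
lemma farRootsBound (f : Polynomial ℂ) {y₀ y₁ : ℂ} {δ : ℝ} (hδ : 0 < δ)
    (h1 : ‖y₁ - y₀‖ ≤ δ / 2) (hroots : ∀ β ∈ f.roots, δ ≤ ‖y₀ - β‖)
    {D : ℕ} (hD : f.natDegree ≤ D) :
    ‖f.eval y₁‖ ≤ (3/2 : ℝ) ^ D * ‖f.eval y₀‖ := by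
  rw [normEvalRoots f y₁]
  have hcard : Multiset.card f.roots ≤ D := le_trans (Polynomial.card_roots' f) hD
  have key : ((f.roots.map fun a => ‖y₁ - a‖)).prod
      ≤ (3/2 : ℝ) ^ (Multiset.card f.roots) * ((f.roots.map fun a => ‖y₀ - a‖)).prod := by
    rw [← prodMapConstMul]
    refine prodMapLe (fun a _ => norm_nonneg _) ?_
    intro a ha
    have h2 := hroots a ha
    calc ‖y₁ - a‖ = ‖(y₁ - y₀) + (y₀ - a)‖ := by ring_nf
      _ ≤ ‖y₁ - y₀‖ + ‖y₀ - a‖ := norm_add_le _ _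
      _ ≤ (3/2 : ℝ) * ‖y₀ - a‖ := by linarith
  have h32 : (3/2:ℝ)^(Multiset.card f.roots) ≤ (3/2:ℝ)^D :=
    pow_le_pow_right₀ (by norm_num) hcard
  have hlc : (0:ℝ) ≤ ‖f.leadingCoeff‖ := norm_nonneg _
  have hp0 : (0:ℝ) ≤ ((f.roots.map fun a => ‖y₀ - a‖)).prod :=
    Multiset.prod_nonneg (by intro x hx; obtain ⟨b, hb, rfl⟩ := Multiset.mem_map.mp hx
                             exact norm_nonneg _)
  calc ‖f.leadingCoeff‖ * ((f.roots.map fun a => ‖y₁ - a‖)).prod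
      ≤ ‖f.leadingCoeff‖ * ((3/2 : ℝ) ^ (Multiset.card f.roots) * ((f.roots.map fun a => ‖y₀ - a‖)).prod) :=
        mul_le_mul_of_nonneg_left key hlc
    _ = (‖f.leadingCoeff‖ * ((f.roots.map fun a => ‖y₀ - a‖)).prod) * (3/2:ℝ)^(Multiset.card f.roots) := by ring
    _ ≤ (‖f.leadingCoeff‖ * ((f.roots.map fun a => ‖y₀ - a‖)).prod) * (3/2:ℝ)^D :=
        mul_le_mul_of_nonneg_left h32 (mul_nonneg hlc hp0)
    _ = (3/2:ℝ)^D * ‖f.eval y₀‖ := by rw [normEvalRoots f y₀]; ring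

/-- lower bound on `‖f y‖` when all roots are `c`-far from `y`, `0 < c ≤ 1`. -/
lemma evalLowerBound (f : Polynomial ℂ) (y : ℂ) {c : ℝ} (hc : 0 < c) (hc1 : c ≤ 1)
    (hroots : ∀ β ∈ f.roots, c ≤ ‖y - β‖) {D : ℕ} (hD : f.natDegree ≤ D) :
    ‖f.leadingCoeff‖ * c ^ D ≤ ‖f.eval y‖ := by
  rw [normEvalRoots f y]
  have hcard : Multiset.card f.roots ≤ D := le_trans (Polynomial.card_roots' f) hD
  have h1 : c ^ D ≤ c ^ (Multiset.card f.roots) := pow_le_pow_of_le_one (le_of_lt hc) hc1 hcard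
  have h2 : (c : ℝ) ^ (Multiset.card f.roots) ≤ ((f.roots.map fun a => ‖y - a‖)).prod := by
    have := prodMapLe (s := f.roots) (f := fun _ => c) (g := fun a => ‖y - a‖)
      (fun a _ => le_of_lt hc) hroots
    calc (c:ℝ) ^ (Multiset.card f.roots) = ((f.roots.map fun _ => c)).prod := by simp
      _ ≤ _ := this
  have := mul_le_mul_of_nonneg_left (le_trans h1 h2) (norm_nonneg f.leadingCoeff)
  exact this

/-- Cauchy-type root bound. -/
lemma rootBound (f : Polynomial ℂ) (hf : f ≠ 0) {β : ℂ} (hβ : f.IsRoot β) :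
    ‖β‖ ≤ 1 + (∑ a ∈ Finset.range f.natDegree, ‖f.coeff a‖) / ‖f.leadingCoeff‖ := by
  have hlc : f.leadingCoeff ≠ 0 := leadingCoeff_ne_zero.mpr hf
  have hlcn : (0:ℝ) < ‖f.leadingCoeff‖ := norm_pos_iff.mpr hlc
  set D := f.natDegree with hD
  set S := ∑ a ∈ Finset.range D, ‖f.coeff a‖ with hS
  have hSn : 0 ≤ S := Finset.sum_nonneg (fun _ _ => norm_nonneg _)
  by_contra hcon
  push_neg at hcon
  have hβ1 : (1:ℝ) ≤ ‖β‖ := by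
    have : 0 ≤ S / ‖f.leadingCoeff‖ := div_nonneg hSn (le_of_lt hlcn)
    linarith
  have hDpos : D ≠ 0 := by
    intro h
    obtain ⟨c, hc⟩ := Polynomial.natDegree_eq_zero.mp (hD ▸ h)
    rw [← hc] at hβ hf
    simp [Polynomial.IsRoot] at hβ
    simp [hβ] at hf
  have heval : f.eval β = ∑ a ∈ Finset.range (D+1), f.coeff a * β ^ a :=
    Polynomial.eval_eq_sum_range _
  rw [Finset.sum_range_succ] at heval
  have hzero : f.coeff D * β ^ D = -∑ a ∈ Finset.range D, f.coeff a * β ^ a := by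
    have h0 : f.eval β = 0 := hβ
    rw [heval] at h0
    linear_combination h0
  have hlcD : f.leadingCoeff = f.coeff D := rfl
  have h1 : ‖f.coeff D * β ^ D‖ = ‖f.leadingCoeff‖ * ‖β‖ ^ D := by
    rw [norm_mul, norm_pow, hlcD]
  have h2 : ‖-∑ a ∈ Finset.range D, f.coeff a * β ^ a‖
      ≤ ∑ a ∈ Finset.range D, ‖f.coeff a‖ * ‖β‖ ^ a := by
    rw [norm_neg]
    refine le_trans (norm_sum_le _ _) (Finset.sum_le_sum ?_)
    intro a _
    rw [norm_mul, norm_pow]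
  have h3 : ∑ a ∈ Finset.range D, ‖f.coeff a‖ * ‖β‖ ^ a ≤ S * ‖β‖ ^ (D-1) := by
    rw [hS, Finset.sum_mul]
    refine Finset.sum_le_sum ?_
    intro a ha
    have haD : a < D := Finset.mem_range.mp ha
    have h5 : ‖β‖ ^ a ≤ ‖β‖ ^ (D-1) := pow_le_pow_right₀ hβ1 (by omega)
    exact mul_le_mul_of_nonneg_left h5 (norm_nonneg _)
  have hnorm : ‖f.leadingCoeff‖ * ‖β‖ ^ D ≤ S * ‖β‖ ^ (D-1) := by
    calc ‖f.leadingCoeff‖ * ‖β‖ ^ D = ‖f.coeff D * β ^ D‖ := h1.symm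
      _ = ‖-∑ a ∈ Finset.range D, f.coeff a * β ^ a‖ := by rw [hzero]
      _ ≤ _ := le_trans h2 h3
  have hpow : ‖β‖ ^ D = ‖β‖ ^ (D-1) * ‖β‖ := by
    conv_lhs => rw [show D = (D-1)+1 by omega]
    rw [pow_succ]
  have hppos : (0:ℝ) < ‖β‖ ^ (D-1) := by positivity
  rw [hpow] at hnorm
  have hkey : ‖f.leadingCoeff‖ * ‖β‖ ≤ S := by
    refine le_of_mul_le_mul_right ?_ hppos
    calc (‖f.leadingCoeff‖ * ‖β‖) * ‖β‖^(D-1) = ‖f.leadingCoeff‖ * (‖β‖^(D-1) * ‖β‖) := by ring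
      _ ≤ S * ‖β‖^(D-1) := hnorm
      _ = S * ‖β‖^(D-1) := rfl
  have hfin : ‖β‖ ≤ S / ‖f.leadingCoeff‖ := by
    rw [le_div_iff₀ hlcn]; linarith
  linarith

lemma evalDiff (f g : Polynomial ℂ) {N : ℕ} (hf : f.natDegree < N) (hg : g.natDegree < N) (y : ℂ) :
    ‖f.eval y - g.eval y‖ ≤ ∑ a ∈ Finset.range N, ‖f.coeff a - g.coeff a‖ * ‖y‖ ^ a := by
  rw [Polynomial.eval_eq_sum_range' hf, Polynomial.eval_eq_sum_range' hg, ← Finset.sum_sub_distrib]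
  refine le_trans (norm_sum_le _ _) ?_
  apply Finset.sum_le_sum
  intro a _
  rw [← sub_mul, norm_mul, norm_pow]



lemma rootSumAux : ∀ (n : ℕ) (f : Polynomial ℂ), f.natDegree = n → f.eval 0 ≠ 0 →
    f.derivative.eval 0 = f.eval 0 * ((f.roots.map fun β => (-β)⁻¹).sum) ∧
    (f.derivative.eval 0)^2 - f.eval 0 * (f.derivative.derivative.eval 0)
      = (f.eval 0)^2 * ((f.roots.map fun β => (β^2)⁻¹).sum) := by
  intro n
  induction n with
  | zero =>
      intro f hdeg h0
      obtain ⟨c, rfl⟩ := Polynomial.natDegree_eq_zero.mp hdeg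
      simp
  | succ n ih =>
      intro f hdeg h0
      have hfne : f ≠ 0 := by intro h; rw [h] at h0; simp at h0
      have hdegpos : f.degree ≠ 0 := by
        rw [Polynomial.degree_eq_natDegree hfne, hdeg]
        exact_mod_cast (by omega : (n+1 : ℕ) ≠ 0)
      obtain ⟨β, hβ⟩ := Complex.exists_root (by
        rw [Polynomial.degree_eq_natDegree hfne, hdeg]; exact_mod_cast Nat.succ_pos n)
      obtain ⟨g, rfl⟩ := (Polynomial.dvd_iff_isRoot.mpr hβ)
      have hgne : g ≠ 0 := by
        intro h; rw [h, mul_zero] at h0; simp at h0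
      have hXne : (X - C β) ≠ 0 := Polynomial.X_sub_C_ne_zero β
      have hg0 : g.eval 0 ≠ 0 := by
        intro h; rw [Polynomial.eval_mul, h, mul_zero] at h0; exact h0 rfl
      have hβ0 : β ≠ 0 := by
        intro h; rw [h] at h0; simp at h0
      have hdg : g.natDegree = n := by
        have := Polynomial.natDegree_mul hXne hgne
        rw [Polynomial.natDegree_X_sub_C] at this
        omega
      obtain ⟨ih1, ih2⟩ := ih g hdg hg0
      have hroots : ((X - C β) * g).roots = β ::ₘ g.roots := by
        rw [Polynomial.roots_mul (mul_ne_zero hXne hgne), Polynomial.roots_X_sub_C]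
        rfl
      have hd : ((X - C β) * g).derivative = g + (X - C β) * g.derivative := by
        rw [Polynomial.derivative_mul]
        simp
      have hdd : ((X - C β) * g).derivative.derivative
          = 2 * g.derivative + (X - C β) * g.derivative.derivative := by
        rw [hd, Polynomial.derivative_add, Polynomial.derivative_mul]
        simp; ring
      set g0 := g.eval 0 with hg0d
      set g1 := g.derivative.eval 0 with hg1d
      set g2 := g.derivative.derivative.eval 0 with hg2d
      have he : ((X - C β) * g).eval 0 = -(β * g0) := by
        simp [hg0d]; try ring
      have he1 : ((X - C β) * g).derivative.eval 0 = g0 - β * g1 := by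
        rw [hd]; simp [hg0d, hg1d]; try ring
      have he2 : ((X - C β) * g).derivative.derivative.eval 0 = 2 * g1 - β * g2 := by
        rw [hdd]; simp [hg1d, hg2d]; try ring
      have hnegββ : (-β) * (-β)⁻¹ = 1 := mul_inv_cancel₀ (neg_ne_zero.mpr hβ0)
      have hββ2 : (β^2) * (β^2)⁻¹ = 1 := mul_inv_cancel₀ (pow_ne_zero 2 hβ0)
      constructor
      · rw [he1, he, hroots, Multiset.map_cons, Multiset.sum_cons]
        linear_combination (-β) * ih1 - g0 * hnegββ
      · rw [he1, he2, he, hroots, Multiset.map_cons, Multiset.sum_cons]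
        linear_combination (β^2 : ℂ) * ih2 - (g0^2 : ℂ) * hββ2



lemma pickDeriv (f : ℂ → ℂ) (x₀ : ℝ) (d : ℂ) (hd : HasDerivAt f d (x₀ : ℂ))
    (hre : ∀ t : ℝ, (f t).im = 0)
    (him : ∃ δ > 0, ∀ ε : ℝ, 0 < ε → ε < δ → (f ((x₀ : ℂ) + ε * Complex.I)).im ≤ 0) :
    d.im = 0 ∧ d.re ≤ 0 := by
  obtain ⟨δ, hδ, him⟩ := him
  have hslope : Tendsto (slope f (x₀ : ℂ)) (nhdsWithin (x₀:ℂ) {(x₀:ℂ)}ᶜ) (nhds d) :=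
    hasDerivAt_iff_tendsto_slope.mp hd
  constructor
  · -- restrict to the real line
    have hg : HasDerivAt (fun t : ℝ => f t) d x₀ := hd.comp_ofReal
    have hgim : HasDerivAt (fun t : ℝ => (f t).im) d.im x₀ :=
      (Complex.imCLM.hasFDerivAt.comp_hasDerivAt x₀ hg)
    have hconst : (fun t : ℝ => (f t).im) = fun _ => (0:ℝ) := funext hre
    rw [hconst] at hgim
    have := (hasDerivAt_const (x₀:ℝ) (0:ℝ)).unique hgim
    exact this.symm
  · -- approach along the imaginary direction
    set e : ℕ → ℝ := fun n => δ / (n + 2) with he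
    have hepos : ∀ n, 0 < e n := fun n => by positivity
    have helt : ∀ n, e n < δ := by
      intro n
      rw [he]
      rw [div_lt_iff₀ (by positivity)]
      nlinarith [hδ]
    have hetend : Tendsto e atTop (nhds 0) := by
      rw [he]
      have := tendsto_natCast_atTop_atTop (R := ℝ)
      apply Tendsto.div_atTop (tendsto_const_nhds)
      exact tendsto_atTop_add_const_right atTop 2 this
    set zseq : ℕ → ℂ := fun n => (x₀ : ℂ) + (e n) * Complex.I with hz
    have hztend : Tendsto zseq atTop (nhdsWithin (x₀:ℂ) {(x₀:ℂ)}ᶜ) := by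
      rw [tendsto_nhdsWithin_iff]
      constructor
      · rw [hz]
        have h1 : Tendsto (fun n => ((e n : ℂ)) * Complex.I) atTop (nhds 0) := by
          have : Tendsto (fun n => ((e n : ℂ))) atTop (nhds 0) := by
            rw [show ((0:ℂ)) = ((0:ℝ):ℂ) by simp]
            exact (Complex.continuous_ofReal.tendsto 0).comp hetend
          simpa using this.mul_const Complex.I
        simpa using tendsto_const_nhds.add h1
      · filter_upwards with n
        simp only [Set.mem_compl_iff, Set.mem_singleton_iff, hz]
        intro hcon
        have : ((x₀:ℂ) + (e n) * Complex.I).im = (x₀:ℂ).im := by rw [hcon]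
        simp at this
        exact (ne_of_gt (hepos n)) this
    have hlim : Tendsto (fun n => (slope f (x₀:ℂ) (zseq n)).re) atTop (nhds d.re) :=
      (Complex.continuous_re.tendsto d).comp (hslope.comp hztend)
    refine le_of_tendsto hlim ?_
    filter_upwards with n
    have hre0 : (f (x₀:ℂ)).im = 0 := hre x₀
    have hcompute : (slope f (x₀:ℂ) (zseq n)).re = (f (zseq n)).im / e n := by
      rw [slope_def_field, hz]
      have hne : ((e n : ℂ)) ≠ 0 := by
        simp only [ne_eq, Complex.ofReal_eq_zero]
        exact ne_of_gt (hepos n)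
      simp only [add_sub_cancel_left]
      rw [div_mul_eq_div_div_swap, Complex.div_I, div_ofReal]
      simp [Complex.mul_I_re, hre0]
    rw [hcompute]
    apply div_nonpos_of_nonpos_of_nonneg
    · exact him (e n) (hepos n) (helt n)
    · exact le_of_lt (hepos n)


lemma existsNear (r : Polynomial ℂ) (hr : r ≠ 0) (y₀ : ℂ) (δ : ℝ) (hδ : 0 < δ) :
    ∃ y₁ : ℂ, ‖y₁ - y₀‖ ≤ δ / 2 ∧ r.eval y₁ ≠ 0 := by
  have hfin : {x : ℂ | r.IsRoot x}.Finite := Polynomial.finite_setOf_isRoot hr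
  have hinj : Set.InjOn (fun t : ℝ => y₀ + (t : ℂ)) ((fun t : ℝ => y₀ + (t:ℂ)) ⁻¹' {x : ℂ | r.IsRoot x}) := by
    intro a _ b _ h
    simp only [add_right_inj, Complex.ofReal_inj] at h
    exact h
  have hfin2 : ((fun t : ℝ => y₀ + (t:ℂ)) ⁻¹' {x : ℂ | r.IsRoot x}).Finite :=
    hfin.preimage hinj
  have hne : (Set.Ioo (0:ℝ) (δ/2) \ ((fun t : ℝ => y₀ + (t:ℂ)) ⁻¹' {x : ℂ | r.IsRoot x})).Nonempty :=
    ((Set.Ioo_infinite (by linarith)).diff hfin2).nonempty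
  obtain ⟨t, ht1, ht2⟩ := hne
  refine ⟨y₀ + t, ?_, ?_⟩
  · have : ‖(y₀ + (t:ℂ)) - y₀‖ = |t| := by
      simp [Complex.norm_real]
    rw [this, abs_of_pos ht1.1]
    exact le_of_lt ht1.2
  · intro h
    exact ht2 (by simpa [Polynomial.IsRoot] using h)

lemma goodPoint (c : Polynomial ℂ) (hc : c ≠ 0) (η : ℝ) (hη : 0 < η) :
    ∃ x : ℝ, 0 < x ∧ x < η ∧ c.eval (x:ℂ) ≠ 0 := by
  have hfin : {x : ℂ | c.IsRoot x}.Finite := Polynomial.finite_setOf_isRoot hc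
  have hinj : Set.InjOn (fun t : ℝ => (t : ℂ)) ((fun t : ℝ => (t:ℂ)) ⁻¹' {x : ℂ | c.IsRoot x}) :=
    fun a _ b _ h => Complex.ofReal_inj.mp h
  have hfin2 := hfin.preimage hinj
  have hne : (Set.Ioo (0:ℝ) η \ ((fun t : ℝ => (t:ℂ)) ⁻¹' {x : ℂ | c.IsRoot x})).Nonempty :=
    ((Set.Ioo_infinite hη).diff hfin2).nonempty
  obtain ⟨t, ht1, ht2⟩ := hne
  exact ⟨t, ht1.1, ht1.2, fun h => ht2 (by simpa [Polynomial.IsRoot] using h)⟩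

/-- The key specialization lemma: if all coordinates of `w` are either in the open upper
half plane or real of the form `z k + v k` with `v ≥ 0`, then `p(w) ≠ 0`. -/
lemma keyS {m : ℕ} (p : MvPolynomial (Fin m) ℝ) (hp : RealStable p)
    (z : Fin m → ℝ) (hz : AboveRoots p z) :
    ∀ (n : ℕ) (S : Finset (Fin m)), S.card = n → ∀ (v : Fin m → ℝ), (∀ k, 0 ≤ v k) →
      ∀ (w : Fin m → ℂ), (∀ k ∈ S, 0 < (w k).im) → (∀ k ∉ S, w k = ((z k + v k : ℝ) : ℂ)) →
      MvPolynomial.aeval w p ≠ 0 := by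
  intro n
  induction n with
  | zero =>
      intro S hS v hv w hw1 hw2
      have hS0 : S = ∅ := Finset.card_eq_zero.mp hS
      have hw : w = fun k => (((z + v) k : ℝ) : ℂ) := by
        funext k
        have := hw2 k (by simp [hS0])
        simpa using this
      rw [hw, aevalReal]
      have := hz v hv
      simp only [ne_eq, Complex.ofReal_eq_zero]
      intro h
      rw [h] at this
      exact lt_irrefl 0 this
  | succ n ih =>
      intro S hS v hv w hw1 hw2
      have hSne : S.Nonempty := Finset.card_pos.mp (by omega)
      obtain ⟨k₁, hk₁⟩ := hSne
      intro hzero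
      -- the univariate restriction in coordinate k₁
      set r : Polynomial ℂ :=
        MvPolynomial.aeval (fun k => if k = k₁ then Polynomial.X else Polynomial.C (w k)) p with hrdef
      have hφ : ∀ y : ℂ, ∀ rr : ℝ, (Polynomial.evalRingHom y) (algebraMap ℝ (Polynomial ℂ) rr)
          = algebraMap ℝ ℂ rr := by
        intro y rr
        simp [Polynomial.algebraMap_apply]
      have hreval : ∀ y : ℂ, r.eval y = MvPolynomial.aeval (Function.update w k₁ y) p := by
        intro y
        rw [hrdef]
        have := genHom (Polynomial.evalRingHom y) (hφ y)
          (fun k => if k = k₁ then Polynomial.X else Polynomial.C (w k)) p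
        rw [show (Polynomial.evalRingHom y) (MvPolynomial.aeval
            (fun k => if k = k₁ then Polynomial.X else Polynomial.C (w k)) p)
          = Polynomial.eval y (MvPolynomial.aeval
            (fun k => if k = k₁ then Polynomial.X else Polynomial.C (w k)) p) from rfl] at this
        rw [this]
        have hpt : (fun k => (Polynomial.evalRingHom y) (if k = k₁ then Polynomial.X else Polynomial.C (w k)))
            = Function.update w k₁ y := by
          funext k
          by_cases hk : k = k₁ <;> simp [hk, Function.update_apply]
        rw [hpt]
      by_cases hr0 : r = 0
      · -- then we may set coordinate k₁ to the real value z k₁ and contradict the IH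
        have h1 : MvPolynomial.aeval (Function.update w k₁ ((z k₁ : ℝ) : ℂ)) p = 0 := by
          rw [← hreval, hr0]
          simp
        refine ih (S.erase k₁) (by rw [Finset.card_erase_of_mem hk₁, hS]; rfl)
          (Function.update v k₁ 0) ?_ (Function.update w k₁ ((z k₁:ℝ):ℂ)) ?_ ?_ h1
        · intro k
          by_cases hk : k = k₁ <;> simp [hk, Function.update_apply, hv k]
        · intro k hk
          have hk2 : k ≠ k₁ := Finset.ne_of_mem_erase hk
          rw [Function.update_apply, if_neg hk2]
          exact hw1 k (Finset.mem_of_mem_erase hk)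
        · intro k hk
          by_cases hk2 : k = k₁
          · subst hk2
            simp [Function.update_apply]
          · have hkS : k ∉ S := fun hmem => hk (Finset.mem_erase.mpr ⟨hk2, hmem⟩)
            rw [Function.update_apply, if_neg hk2, Function.update_apply, if_neg hk2]
            exact hw2 k hkS
      · -- the honest case: r ≠ 0 has the upper root w k₁; move real coordinates up by ε
        set y₀ := w k₁ with hy₀def
        have hy₀ : 0 < y₀.im := hw1 k₁ hk₁
        have hry₀ : r.eval y₀ = 0 := by
          rw [hreval, hy₀def, Function.update_eq_self]
          exact hzero
        -- bivariate family
        set σK : Fin m → Polynomial (Polynomial ℂ) := fun k =>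
          if k = k₁ then Polynomial.X
          else Polynomial.C (Polynomial.C (w k) +
            (if k ∈ S then 0 else Polynomial.C Complex.I * Polynomial.X)) with hσK
        set BK : Polynomial (Polynomial ℂ) := MvPolynomial.aeval σK p with hBK
        set KC : ℂ → Polynomial ℂ := fun t => BK.map (Polynomial.evalRingHom t) with hKC
        have hφ2 : ∀ (t y : ℂ) (rr : ℝ),
            ((Polynomial.evalRingHom y).comp ((Polynomial.mapRingHom (Polynomial.evalRingHom t)))) (algebraMap ℝ (Polynomial (Polynomial ℂ)) rr)
            = algebraMap ℝ ℂ rr := by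
          intro t y rr
          simp [Polynomial.algebraMap_apply]
        have hKCeval : ∀ t y : ℂ, (KC t).eval y =
            MvPolynomial.aeval (fun k => if k = k₁ then y
              else w k + (if k ∈ S then 0 else Complex.I * t)) p := by
          intro t y
          have := genHom ((Polynomial.evalRingHom y).comp (Polynomial.mapRingHom (Polynomial.evalRingHom t))) (hφ2 t y) σK p
          rw [show ((Polynomial.evalRingHom y).comp (Polynomial.mapRingHom (Polynomial.evalRingHom t))) (MvPolynomial.aeval σK p)
            = Polynomial.eval y ((MvPolynomial.aeval σK p).map (Polynomial.evalRingHom t)) from rfl] at this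
        
          rw [hKC, hBK, this]
          have hpt : (fun k => ((Polynomial.evalRingHom y).comp (Polynomial.mapRingHom (Polynomial.evalRingHom t))) (σK k))
              = (fun k => if k = k₁ then y else w k + (if k ∈ S then 0 else Complex.I * t)) := by
            funext k
            rw [hσK]
            by_cases hk : k = k₁
            · simp [hk]
            · by_cases hkS : k ∈ S <;> simp [hk, hkS]
          rw [hpt]
        have hK0 : ∀ y : ℂ, (KC 0).eval y = r.eval y := by
          intro y
          rw [hKCeval, hreval]
          have hpt : (fun k => if k = k₁ then y else w k + (if k ∈ S then 0 else Complex.I * 0))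
              = Function.update w k₁ y := by
            funext k
            by_cases hk : k = k₁ <;> simp [hk, Function.update_apply]
          rw [hpt]
        have hKne : ∀ ε : ℝ, 0 < ε → ∀ y : ℂ, 0 < y.im → (KC (ε:ℂ)).eval y ≠ 0 := by
          intro ε hε y hy
          rw [hKCeval]
          apply hp
          intro k
          by_cases hk : k = k₁
          · simp [hk, hy]
          · by_cases hkS : k ∈ S
            · simp only [hk, if_false, hkS, if_true, add_zero]
              exact hw1 k hkS
            · simp only [hk, if_false, hkS]
              rw [hw2 k hkS]
              simp [hε]
        -- degree bound
        set D := BK.natDegree with hDdef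
        have hDK : ∀ t : ℂ, (KC t).natDegree ≤ D := fun t => Polynomial.natDegree_map_le
        set δ := y₀.im with hδdef
        obtain ⟨y₁, hy₁near, hy₁ne⟩ := existsNear r hr0 y₀ δ hy₀
        -- sequence of positive ε's
        set e : ℕ → ℝ := fun N => 1/(N+1) with hedef
        have hepos : ∀ N : ℕ, 0 < e N := fun N => by positivity
        by_cases hcase : ∃ N : ℕ, ∃ β ∈ (KC ((e N : ℝ) : ℂ)).roots, ‖y₀ - β‖ < δ
        · obtain ⟨N, β, hβmem, hβnear⟩ := hcase
          have hβroot := (Polynomial.mem_roots'.mp hβmem)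
          have hβim : 0 < β.im := by
            have h1 : |β.im - y₀.im| ≤ ‖β - y₀‖ := by
              have := Complex.abs_im_le_norm (β - y₀)
              simpa [Complex.sub_im] using this
            have h2 : ‖β - y₀‖ < y₀.im := by
              rw [norm_sub_rev]
              rw [hδdef] at hβnear
              exact hβnear
            have h3 := abs_lt.mp (lt_of_le_of_lt h1 h2)
            linarith [h3.1]
          exact hKne (e N) (hepos N) β hβim hβroot.2
        · push_neg at hcase
          -- all roots stay far from y₀: two point estimate kills r at y₁
          have hfarN : ∀ N : ℕ, ‖(KC ((e N:ℝ):ℂ)).eval y₁‖ ≤ (3/2:ℝ)^D * ‖(KC ((e N:ℝ):ℂ)).eval y₀‖ := by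
            intro N
            exact farRootsBound _ hy₀ hy₁near (hcase N) (hDK _)
          -- limits
          have hcont : ∀ y : ℂ, Tendsto (fun N : ℕ => (KC ((e N:ℝ):ℂ)).eval y) atTop (nhds (r.eval y)) := by
            intro y
            have h1 : Tendsto (fun N : ℕ => ((e N : ℝ) : ℂ)) atTop (nhds 0) := by
              rw [show ((0:ℂ)) = ((0:ℝ):ℂ) by simp]
              apply (Complex.continuous_ofReal.tendsto 0).comp
              rw [hedef]
              simpa [one_div] using tendsto_one_div_add_atTop_nhds_zero_nat (𝕜 := ℝ)
            have h2 : Continuous fun t : ℂ => (KC t).eval y := by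
              have h3 : (fun t : ℂ => (KC t).eval y) = fun t : ℂ =>
                  MvPolynomial.aeval (fun k => if k = k₁ then y
                    else w k + (if k ∈ S then 0 else Complex.I * t)) p := by
                funext t; rw [hKCeval]
              rw [h3]
              apply (contMv p).comp
              apply continuous_pi
              intro k
              by_cases hk : k = k₁
              · simp only [hk, if_true]; exact continuous_const
              · by_cases hkS : k ∈ S
                · simp only [hk, if_false, hkS, if_true]; exact continuous_const
                · simp only [hk, if_false, hkS]
                  exact continuous_const.add (continuous_const.mul continuous_id)
            have := (h2.tendsto 0).comp h1
            rw [show (KC 0).eval y = r.eval y from hK0 y] at this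
            exact this
          have hlim1 : Tendsto (fun N : ℕ => ‖(KC ((e N:ℝ):ℂ)).eval y₁‖) atTop (nhds ‖r.eval y₁‖) :=
            (continuous_norm.tendsto _).comp (hcont y₁)
          have hlim2 : Tendsto (fun N : ℕ => (3/2:ℝ)^D * ‖(KC ((e N:ℝ):ℂ)).eval y₀‖) atTop
              (nhds ((3/2:ℝ)^D * ‖r.eval y₀‖)) :=
            ((continuous_norm.tendsto _).comp (hcont y₀)).const_mul _
          have hfin : ‖r.eval y₁‖ ≤ (3/2:ℝ)^D * ‖r.eval y₀‖ :=
            le_of_tendsto_of_tendsto' hlim1 hlim2 hfarN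
          rw [hry₀] at hfin
          simp only [norm_zero, mul_zero] at hfin
          have : r.eval y₁ = 0 := norm_eq_zero.mp (le_antisymm hfin (norm_nonneg _))
          exact hy₁ne this

lemma imSum (s : Multiset ℂ) : s.sum.im = ((s.map Complex.im)).sum := by
  induction s using Multiset.induction_on with
  | empty => simp
  | cons a s ih => simp [ih]

lemma sumNonpos (s : Multiset ℝ) (h : ∀ x ∈ s, x ≤ 0) : s.sum ≤ 0 := by
  induction s using Multiset.induction_on with
  | empty => simp
  | cons a s ih =>
      rw [Multiset.sum_cons]
      have h1 := h a (Multiset.mem_cons_self a s)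
      have h2 := ih (fun x hx => h x (Multiset.mem_cons_of_mem hx))
      linarith

section Master

variable {m : ℕ} (p : MvPolynomial (Fin m) ℝ) (z : Fin m → ℝ) (i j : Fin m)

/-- coefficient-level bivariate polynomial: outer variable is `z_j`, inner is `z_i`. -/
def σQ : Fin m → Polynomial (Polynomial ℂ) := fun k =>
  Polynomial.C (Polynomial.C ((z k : ℂ)) + (if k = i then Polynomial.X else 0)) +
    (if k = j then Polynomial.X else 0)

def BQ : Polynomial (Polynomial ℂ) := MvPolynomial.aeval (σQ z i j) p

def Qx (x : ℂ) : Polynomial ℂ := (BQ p z i j).map (Polynomial.evalRingHom x)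

def ptf (x y : ℂ) : Fin m → ℂ := fun k =>
  (z k : ℂ) + (if k = i then x else 0) + (if k = j then y else 0)

def uln (x : ℂ) : Fin m → ℂ := fun k => (z k : ℂ) + (if k = i then x else 0)

def sx (x : ℂ) : Fin m → Polynomial ℂ := fun k =>
  Polynomial.C ((z k : ℂ) + (if k = i then x else 0)) + (if k = j then Polynomial.X else 0)

def ux : Fin m → Polynomial ℂ := fun k =>
  Polynomial.C ((z k : ℂ)) + (if k = i then Polynomial.X else 0)

lemma hQeval (x y : ℂ) (q : MvPolynomial (Fin m) ℝ) :
    ((MvPolynomial.aeval (σQ z i j) q).map (Polynomial.evalRingHom x)).eval y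
      = MvPolynomial.aeval (ptf z i j x y) q := by
  have hφ2 : ∀ rr : ℝ, ((Polynomial.evalRingHom y).comp
      (Polynomial.mapRingHom (Polynomial.evalRingHom x))) (algebraMap ℝ (Polynomial (Polynomial ℂ)) rr)
      = algebraMap ℝ ℂ rr := by
    intro rr
    simp [Polynomial.algebraMap_apply]
  have := genHom ((Polynomial.evalRingHom y).comp (Polynomial.mapRingHom (Polynomial.evalRingHom x)))
    hφ2 (σQ z i j) q
  rw [show ((Polynomial.evalRingHom y).comp (Polynomial.mapRingHom (Polynomial.evalRingHom x)))
      (MvPolynomial.aeval (σQ z i j) q)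
    = ((MvPolynomial.aeval (σQ z i j) q).map (Polynomial.evalRingHom x)).eval y from rfl] at this
  rw [this]
  have hpt : (fun k => ((Polynomial.evalRingHom y).comp
      (Polynomial.mapRingHom (Polynomial.evalRingHom x))) (σQ z i j k)) = ptf z i j x y := by
    funext k
    simp only [σQ, ptf, RingHom.comp_apply]
    by_cases hk1 : k = i
    · by_cases hk2 : k = j
      · have hij : i = j := hk1.symm.trans hk2
        subst hk1
        subst hij
        simp
      · have hij : ¬ i = j := fun h => hk2 (hk1.trans h)
        subst hk1
        simp [hij]
    · by_cases hk2 : k = j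
      · have hji : ¬ j = i := fun h => hk1 (hk2.trans h)
        subst hk2
        simp [hji]
      · simp [hk1, hk2]
  rw [hpt]

lemma hQform (x : ℂ) (q : MvPolynomial (Fin m) ℝ) :
    (MvPolynomial.aeval (σQ z i j) q).map (Polynomial.evalRingHom x)
      = MvPolynomial.aeval (sx z i j x) q := by
  have hφ : ∀ rr : ℝ, (Polynomial.mapRingHom (Polynomial.evalRingHom x))
      (algebraMap ℝ (Polynomial (Polynomial ℂ)) rr) = algebraMap ℝ (Polynomial ℂ) rr := by
    intro rr
    simp [Polynomial.algebraMap_apply]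
  have := genHom (Polynomial.mapRingHom (Polynomial.evalRingHom x)) hφ (σQ z i j) q
  rw [show (Polynomial.mapRingHom (Polynomial.evalRingHom x)) (MvPolynomial.aeval (σQ z i j) q)
    = (MvPolynomial.aeval (σQ z i j) q).map (Polynomial.evalRingHom x) from rfl] at this
  rw [this]
  have hpt : (fun k => (Polynomial.mapRingHom (Polynomial.evalRingHom x)) (σQ z i j k))
      = sx z i j x := by
    funext k
    simp only [σQ, sx]
    by_cases hk1 : k = i
    · by_cases hk2 : k = j
      · have hij : i = j := hk1.symm.trans hk2
        subst hk1
        subst hij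
        simp
      · have hij : ¬ i = j := fun h => hk2 (hk1.trans h)
        subst hk1
        simp [hij]
    · by_cases hk2 : k = j
      · have hji : ¬ j = i := fun h => hk1 (hk2.trans h)
        subst hk2
        simp [hji]
      · simp [hk1, hk2]
  rw [hpt]

lemma hsxForm (x : ℂ) : sx z i j x = fun k =>
    Polynomial.C ((uln z i x) k) + (if k = j then Polynomial.X else 0) := by
  funext k
  simp [sx, uln]

lemma hQderiv (x : ℂ) (q : MvPolynomial (Fin m) ℝ) :
    Polynomial.derivative (MvPolynomial.aeval (sx z i j x) q)
      = MvPolynomial.aeval (sx z i j x) (MvPolynomial.pderiv j q) := by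
  rw [hsxForm]
  exact derivAeval q (uln z i x) j

lemma hEval0 (x : ℂ) (q : MvPolynomial (Fin m) ℝ) :
    (MvPolynomial.aeval (sx z i j x) q).eval 0 = MvPolynomial.aeval (uln z i x) q := by
  have hφ : ∀ rr : ℝ, (Polynomial.evalRingHom (0:ℂ)) (algebraMap ℝ (Polynomial ℂ) rr)
      = algebraMap ℝ ℂ rr := by
    intro rr
    simp [Polynomial.algebraMap_apply]
  have := genHom (Polynomial.evalRingHom (0:ℂ)) hφ (sx z i j x) q
  rw [show (Polynomial.evalRingHom (0:ℂ)) (MvPolynomial.aeval (sx z i j x) q)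
    = (MvPolynomial.aeval (sx z i j x) q).eval 0 from rfl] at this
  rw [this]
  have hpt : (fun k => (Polynomial.evalRingHom (0:ℂ)) (sx z i j x k)) = uln z i x := by
    funext k
    simp only [sx, uln]
    by_cases hk2 : k = j <;> simp [hk2]
  rw [hpt]

lemma hUeval (x : ℂ) (q : MvPolynomial (Fin m) ℝ) :
    (MvPolynomial.aeval (ux z i) q).eval x = MvPolynomial.aeval (uln z i x) q := by
  have hφ : ∀ rr : ℝ, (Polynomial.evalRingHom x) (algebraMap ℝ (Polynomial ℂ) rr)
      = algebraMap ℝ ℂ rr := by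
    intro rr
    simp [Polynomial.algebraMap_apply]
  have := genHom (Polynomial.evalRingHom x) hφ (ux z i) q
  rw [show (Polynomial.evalRingHom x) (MvPolynomial.aeval (ux z i) q)
    = (MvPolynomial.aeval (ux z i) q).eval x from rfl] at this
  rw [this]
  have hpt : (fun k => (Polynomial.evalRingHom x) (ux z i k)) = uln z i x := by
    funext k
    simp only [ux, uln]
    by_cases hk1 : k = i <;> simp [hk1]
  rw [hpt]

lemma hUderiv (q : MvPolynomial (Fin m) ℝ) :
    Polynomial.derivative (MvPolynomial.aeval (ux z i) q)
      = MvPolynomial.aeval (ux z i) (MvPolynomial.pderiv i q) :=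
  derivAeval q (fun k => (z k : ℂ)) i

lemma hUreal (t : ℝ) (q : MvPolynomial (Fin m) ℝ) :
    MvPolynomial.aeval (uln z i (t:ℂ)) q
      = ((MvPolynomial.eval (fun k => z k + (if k = i then t else 0)) q : ℝ) : ℂ) := by
  rw [← aevalReal]
  have hpt : (fun k => ((z k + (if k = i then t else 0) : ℝ) : ℂ)) = uln z i (t:ℂ) := by
    funext k
    simp only [uln]
    by_cases hk : k = i <;> simp [hk]
  rw [hpt]

def Fc : ℂ → ℂ := fun x => MvPolynomial.aeval (uln z i x) p
def Gc : ℂ → ℂ := fun x => MvPolynomial.aeval (uln z i x) (MvPolynomial.pderiv j p)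
def Hc : ℂ → ℂ := fun x => MvPolynomial.aeval (uln z i x) (MvPolynomial.pderiv j (MvPolynomial.pderiv j p))
def Fd : ℂ → ℂ := fun x => MvPolynomial.aeval (uln z i x) (MvPolynomial.pderiv i p)
def Gd : ℂ → ℂ := fun x => MvPolynomial.aeval (uln z i x) (MvPolynomial.pderiv i (MvPolynomial.pderiv j p))
def Hd : ℂ → ℂ := fun x => MvPolynomial.aeval (uln z i x)
  (MvPolynomial.pderiv i (MvPolynomial.pderiv j (MvPolynomial.pderiv j p)))
def s1 : ℂ → ℂ := fun x => Gc p z i j x / Fc p z i x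
def s2 : ℂ → ℂ := fun x => (Gc p z i j x ^ 2 - Fc p z i x * Hc p z i j x) / (Fc p z i x) ^ 2
def d1 : ℂ → ℂ := fun x =>
  (Gd p z i j x * Fc p z i x - Gc p z i j x * Fd p z i x) / (Fc p z i x) ^ 2
def d2 : ℂ → ℂ := fun x =>
  ((2 * Gc p z i j x * Gd p z i j x - Fd p z i x * Hc p z i j x - Fc p z i x * Hd p z i j x)
      * (Fc p z i x) ^ 2
    - (Gc p z i j x ^ 2 - Fc p z i x * Hc p z i j x) * (2 * Fc p z i x * Fd p z i x))
    / ((Fc p z i x) ^ 2) ^ 2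

lemma hasDerivAux (q : MvPolynomial (Fin m) ℝ) (x : ℂ) :
    HasDerivAt (fun x => MvPolynomial.aeval (uln z i x) q)
      (MvPolynomial.aeval (uln z i x) (MvPolynomial.pderiv i q)) x := by
  have h := Polynomial.hasDerivAt (MvPolynomial.aeval (ux z i) q) x
  have h1 : (fun x => (MvPolynomial.aeval (ux z i) q).eval x)
      = fun x => MvPolynomial.aeval (uln z i x) q := funext (fun x => hUeval z i x q)
  rw [h1] at h
  rwa [hUderiv, hUeval] at h

lemma contAux (q : MvPolynomial (Fin m) ℝ) :
    Continuous (fun x => MvPolynomial.aeval (uln z i x) q) := by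
  apply (contMv q).comp
  apply continuous_pi
  intro k
  simp only [uln]
  by_cases hk : k = i
  · simpa [hk] using continuous_add_left ((z i : ℝ) : ℂ)
  · simpa [hk] using continuous_const

lemma hD1 (x : ℂ) (h : Fc p z i x ≠ 0) : HasDerivAt (s1 p z i j) (d1 p z i j x) x := by
  simp only [s1, d1, Fc, Gc, Fd, Gd] at *
  exact HasDerivAt.div (hasDerivAux z i _ x) (hasDerivAux z i p x) h

lemma hD2 (x : ℂ) (h : Fc p z i x ≠ 0) : HasDerivAt (s2 p z i j) (d2 p z i j x) x := by
  simp only [s2, d2, Fc, Gc, Hc, Fd, Gd, Hd] at *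
  have hF := hasDerivAux z i p x
  have hG := hasDerivAux z i (MvPolynomial.pderiv j p) x
  have hH := hasDerivAux z i (MvPolynomial.pderiv j (MvPolynomial.pderiv j p)) x
  have hnum : HasDerivAt (fun x => (MvPolynomial.aeval (uln z i x)) (MvPolynomial.pderiv j p) ^ 2
      - (MvPolynomial.aeval (uln z i x)) p *
        (MvPolynomial.aeval (uln z i x)) (MvPolynomial.pderiv j (MvPolynomial.pderiv j p)))
      (2 * (MvPolynomial.aeval (uln z i x)) (MvPolynomial.pderiv j p) *
          (MvPolynomial.aeval (uln z i x)) (MvPolynomial.pderiv i (MvPolynomial.pderiv j p))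
        - ((MvPolynomial.aeval (uln z i x)) (MvPolynomial.pderiv i p) *
            (MvPolynomial.aeval (uln z i x)) (MvPolynomial.pderiv j (MvPolynomial.pderiv j p))
          + (MvPolynomial.aeval (uln z i x)) p *
            (MvPolynomial.aeval (uln z i x))
              (MvPolynomial.pderiv i (MvPolynomial.pderiv j (MvPolynomial.pderiv j p))))) x := by
    have h1 := hG.fun_pow 2
    have h2 : HasDerivAt (fun x => (MvPolynomial.aeval (uln z i x)) (MvPolynomial.pderiv j p) ^ 2)
        (2 * (MvPolynomial.aeval (uln z i x)) (MvPolynomial.pderiv j p) *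
          (MvPolynomial.aeval (uln z i x)) (MvPolynomial.pderiv i (MvPolynomial.pderiv j p))) x := by
      exact h1.congr_deriv (by push_cast; ring)
    exact h2.sub (hF.mul hH)
  have hden : HasDerivAt (fun x => ((MvPolynomial.aeval (uln z i x)) p) ^ 2)
      (2 * (MvPolynomial.aeval (uln z i x)) p *
        (MvPolynomial.aeval (uln z i x)) (MvPolynomial.pderiv i p)) x := by
    have h1 := hF.fun_pow 2
    exact h1.congr_deriv (by push_cast; ring)
  have hd := hnum.fun_div hden (pow_ne_zero 2 h)
  exact hd.congr_deriv (by ring)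

lemma hval0 (q : MvPolynomial (Fin m) ℝ) :
    MvPolynomial.aeval (uln z i (0:ℂ)) q = ((MvPolynomial.eval z q : ℝ) : ℂ) := by
  have h := hUreal z i 0 q
  rw [show ((0:ℝ):ℂ) = (0:ℂ) by simp] at h
  rw [h]
  norm_num

lemma hs1real (t : ℝ) : (s1 p z i j (t:ℂ)).im = 0 := by
  simp only [s1, Fc, Gc]
  rw [hUreal, hUreal, ← Complex.ofReal_div]
  exact Complex.ofReal_im _

lemma hs2real (t : ℝ) : (s2 p z i j (t:ℂ)).im = 0 := by
  simp only [s2, Fc, Gc, Hc]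
  rw [hUreal, hUreal, hUreal, ← Complex.ofReal_pow, ← Complex.ofReal_pow,
    ← Complex.ofReal_mul, ← Complex.ofReal_sub, ← Complex.ofReal_div]
  exact Complex.ofReal_im _

lemma hPtConj (x₀ : ℝ) (β : ℂ) :
    (fun k => (starRingEnd ℂ) (ptf z i j (↑x₀) β k)) = ptf z i j (↑x₀) ((starRingEnd ℂ) β) := by
  funext k
  simp only [ptf, map_add]
  rw [Complex.conj_ofReal]
  congr 1
  · congr 1
    by_cases hk : k = i <;> simp [hk, Complex.conj_ofReal]
  · by_cases hk : k = j <;> simp [hk]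

lemma hPtReal (a b : ℝ) (q : MvPolynomial (Fin m) ℝ) :
    MvPolynomial.aeval (ptf z i j (↑a) (↑b)) q
      = ((MvPolynomial.eval (fun k => z k + ((if k = i then a else 0) + (if k = j then b else 0))) q : ℝ) : ℂ) := by
  rw [← aevalReal]
  have hpt : (fun k => ((z k + ((if k = i then a else 0) + (if k = j then b else 0)) : ℝ) : ℂ))
      = ptf z i j (↑a) (↑b) := by
    funext k
    simp only [ptf]
    by_cases hk1 : k = i <;> by_cases hk2 : k = j <;>
      simp [hk1, hk2, apply_ite (fun r : ℝ => (r : ℂ))] <;> ring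
  rw [hpt]

lemma upperNoRoot (hp : RealStable p) (hz : AboveRoots p z) (x₀ : ℝ) (hx₀ : 0 ≤ x₀)
    (γ : ℂ) (hγ : 0 < γ.im) : MvPolynomial.aeval (ptf z i j (↑x₀) γ) p ≠ 0 := by
  refine keyS p hp z hz 1 {j} (Finset.card_singleton j)
    (fun k => if k = i then x₀ else 0) ?_ _ ?_ ?_
  · intro k
    by_cases hk : k = i <;> simp [hk, hx₀]
  · intro k hk
    rw [Finset.mem_singleton] at hk
    subst hk
    simp only [ptf, if_pos rfl]
    by_cases hij : k = i <;> simp [hij, hγ]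
  · intro k hk
    rw [Finset.mem_singleton] at hk
    simp only [ptf]
    by_cases hki : k = i
    · subst hki
      simp [hk]
    · simp [hki, hk]

lemma rootsRealNeg (hp : RealStable p) (hz : AboveRoots p z) (x₀ : ℝ) (hx₀ : 0 ≤ x₀)
    (β : ℂ) (hβ : MvPolynomial.aeval (ptf z i j (↑x₀) β) p = 0) : β.im = 0 ∧ β.re < 0 := by
  have him : β.im = 0 := by
    rcases lt_trichotomy β.im 0 with h | h | h
    · exfalso
      have hconj := aevalConj p (ptf z i j (↑x₀) β)
      rw [hβ, map_zero] at hconj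
      rw [hPtConj] at hconj
      exact upperNoRoot p z i j hp hz x₀ hx₀ _ (by simpa [Complex.conj_im] using neg_pos.mpr h) hconj.symm
    · exact h
    · exact absurd hβ (upperNoRoot p z i j hp hz x₀ hx₀ β h)
  refine ⟨him, ?_⟩
  by_contra hre
  push_neg at hre
  have hβeq : β = ((β.re : ℝ) : ℂ) := by
    apply Complex.ext <;> simp [him]
  rw [hβeq, hPtReal] at hβ
  have hv : ∀ k, 0 ≤ (if k = i then x₀ else 0) + (if k = j then β.re else 0) := by
    intro k
    by_cases hk1 : k = i <;> by_cases hk2 : k = j <;> simp [hk1, hk2] <;> positivity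
  have hpos := hz (fun k => (if k = i then x₀ else 0) + (if k = j then β.re else 0)) hv
  rw [show (z + fun k => (if k = i then x₀ else 0) + (if k = j then β.re else 0))
    = (fun k => z k + ((if k = i then x₀ else 0) + (if k = j then β.re else 0))) from rfl] at hpos
  rw [Complex.ofReal_eq_zero] at hβ
  rw [hβ] at hpos
  exact lt_irrefl 0 hpos

lemma rootsImNonpos (hp : RealStable p) (hz : AboveRoots p z) (x₀ : ℝ) (hx₀ : 0 ≤ x₀)
    (ε : ℝ) (hε : 0 < ε) (β : ℂ)
    (hβ : MvPolynomial.aeval (ptf z i j ((x₀ : ℂ) + (ε : ℂ) * Complex.I) β) p = 0) : β.im ≤ 0 := by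
  by_contra hcon
  push_neg at hcon
  refine keyS p hp z hz ({i, j} : Finset (Fin m)).card {i, j} rfl 0 (fun k => le_refl 0)
    _ ?_ ?_ hβ
  · intro k hk
    rw [Finset.mem_insert, Finset.mem_singleton] at hk
    simp only [ptf]
    rcases hk with hk | hk
    · subst hk
      by_cases hij : k = j <;>
        simp [hij, Complex.add_im, Complex.ofReal_im, Complex.mul_im, Complex.I_im,
          Complex.I_re, Complex.ofReal_re] <;> linarith
    · subst hk
      by_cases hij : k = i <;>
        simp [hij, Complex.add_im, Complex.ofReal_im, Complex.mul_im, Complex.I_im,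
          Complex.I_re, Complex.ofReal_re] <;> linarith
  · intro k hk
    simp only [Finset.mem_insert, Finset.mem_singleton] at hk
    push_neg at hk
    simp only [ptf]
    simp [hk.1, hk.2]

lemma hQsx (x : ℂ) : Qx p z i j x = MvPolynomial.aeval (sx z i j x) p := by
  simp only [Qx, BQ]
  exact hQform z i j x p

lemma hQev0 (x : ℂ) : (Qx p z i j x).eval 0 = Fc p z i x := by
  rw [hQsx, hEval0]
  rfl

lemma hQd1 (x : ℂ) : (Polynomial.derivative (Qx p z i j x)).eval 0 = Gc p z i j x := by
  rw [hQsx, hQderiv, hEval0]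
  rfl

lemma hQd2 (x : ℂ) :
    (Polynomial.derivative (Polynomial.derivative (Qx p z i j x))).eval 0 = Hc p z i j x := by
  rw [hQsx, hQderiv, hQderiv, hEval0]
  rfl

lemma hQrootEval (x β : ℂ) (h : (Qx p z i j x).eval β = 0) :
    MvPolynomial.aeval (ptf z i j x β) p = 0 := by
  rw [← hQeval z i j x β p]
  exact h

lemma hs1sum (x : ℂ) (hF : Fc p z i x ≠ 0) :
    s1 p z i j x = (((Qx p z i j x).roots.map (fun β => (-β)⁻¹)).sum) := by
  have h0 : (Qx p z i j x).eval 0 ≠ 0 := by rw [hQev0]; exact hF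
  obtain ⟨h1, -⟩ := rootSumAux (Qx p z i j x).natDegree (Qx p z i j x) rfl h0
  simp only [s1]
  rw [← hQev0, ← hQd1, h1, mul_div_cancel_left₀ _ h0]

lemma hs2sum (x : ℂ) (hF : Fc p z i x ≠ 0) :
    s2 p z i j x = (((Qx p z i j x).roots.map (fun β => (β^2)⁻¹)).sum) := by
  have h0 : (Qx p z i j x).eval 0 ≠ 0 := by rw [hQev0]; exact hF
  obtain ⟨-, h2⟩ := rootSumAux (Qx p z i j x).natDegree (Qx p z i j x) rfl h0
  simp only [s2]
  rw [← hQev0, ← hQd1, ← hQd2, h2, mul_div_cancel_left₀ _ (pow_ne_zero 2 h0)]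

lemma imS1nonpos (hp : RealStable p) (hz : AboveRoots p z) (x₀ : ℝ) (hx₀ : 0 ≤ x₀)
    (ε : ℝ) (hε : 0 < ε) : (s1 p z i j ((x₀ : ℂ) + (ε:ℂ) * Complex.I)).im ≤ 0 := by
  set x : ℂ := (x₀ : ℂ) + (ε:ℂ) * Complex.I with hx
  by_cases hF : Fc p z i x = 0
  · simp [s1, hF]
  · rw [hs1sum p z i j x hF, imSum, Multiset.map_map]
    apply sumNonpos
    intro t ht
    obtain ⟨β, hβ, rfl⟩ := Multiset.mem_map.mp ht
    have hβ0 : (Qx p z i j x).eval β = 0 := (Polynomial.mem_roots'.mp hβ).2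
    have him : β.im ≤ 0 :=
      rootsImNonpos p z i j hp hz x₀ hx₀ ε hε β (hQrootEval p z i j x β hβ0)
    simp only [Function.comp_apply, Complex.inv_im, Complex.neg_im]
    apply div_nonpos_of_nonpos_of_nonneg
    · simpa using him
    · exact Complex.normSq_nonneg _

lemma imS2nonpos (hp : RealStable p) (hz : AboveRoots p z) (x₀ : ℝ) (hx₀ : 0 ≤ x₀)
    (ε : ℝ) (hε : 0 < ε)
    (hRe : ∀ β : ℂ, (Qx p z i j ((x₀ : ℂ) + (ε:ℂ) * Complex.I)).eval β = 0 → β.re ≤ 0) :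
    (s2 p z i j ((x₀ : ℂ) + (ε:ℂ) * Complex.I)).im ≤ 0 := by
  set x : ℂ := (x₀ : ℂ) + (ε:ℂ) * Complex.I with hx
  by_cases hF : Fc p z i x = 0
  · simp [s2, hF]
  · rw [hs2sum p z i j x hF, imSum, Multiset.map_map]
    apply sumNonpos
    intro t ht
    obtain ⟨β, hβ, rfl⟩ := Multiset.mem_map.mp ht
    have hβ0 : (Qx p z i j x).eval β = 0 := (Polynomial.mem_roots'.mp hβ).2
    have him : β.im ≤ 0 :=
      rootsImNonpos p z i j hp hz x₀ hx₀ ε hε β (hQrootEval p z i j x β hβ0)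
    have hre : β.re ≤ 0 := hRe β hβ0
    simp only [Function.comp_apply, Complex.inv_im]
    apply div_nonpos_of_nonpos_of_nonneg
    · have : (β^2).im = 2 * β.re * β.im := by
        simp [pow_two, Complex.mul_im]
        ring
      rw [this]
      simp only [neg_nonpos]
      nlinarith
    · exact Complex.normSq_nonneg _

lemma eventuallyRe (hp : RealStable p) (hz : AboveRoots p z) (x₀ : ℝ) (hx₀ : 0 ≤ x₀)
    (hgood : ((BQ p z i j).leadingCoeff).eval (x₀ : ℂ) ≠ 0) :
    ∃ δ > 0, ∀ ε : ℝ, 0 < ε → ε < δ →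
      ∀ β : ℂ, (Qx p z i j ((x₀:ℂ) + (ε:ℂ) * Complex.I)).eval β = 0 → β.re ≤ 0 := by
  classical
  set D := (BQ p z i j).natDegree with hDdef
  set f₀ := Qx p z i j (x₀ : ℂ) with hf₀def
  have hcoeff : ∀ (t : ℂ) (a : ℕ), (Qx p z i j t).coeff a = ((BQ p z i j).coeff a).eval t :=
    fun t a => Polynomial.coeff_map _ a
  have hf₀D : f₀.coeff D ≠ 0 := by
    rw [hf₀def, hcoeff]
    exact hgood
  have hdeg₀ : f₀.natDegree = D := le_antisymm Polynomial.natDegree_map_le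
    (Polynomial.le_natDegree_of_ne_zero hf₀D)
  have hf₀ne : f₀ ≠ 0 := fun h => hf₀D (by rw [h]; simp)
  have hlc₀ : f₀.leadingCoeff ≠ 0 := Polynomial.leadingCoeff_ne_zero.mpr hf₀ne
  -- roots of f₀ are real and negative
  have hroots₀ : ∀ α ∈ f₀.roots, α.im = 0 ∧ α.re < 0 := by
    intro α hα
    exact rootsRealNeg p z i j hp hz x₀ hx₀ α
      (hQrootEval p z i j _ α (Polynomial.isRoot_of_mem_roots hα))
  obtain ⟨δ₀, hδ₀pos, hδ₀⟩ : ∃ δ₀ > 0, ∀ α ∈ f₀.roots, α.re ≤ -δ₀ := by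
    by_cases hr0 : f₀.roots = 0
    · exact ⟨1, by norm_num, by intro α hα; rw [hr0] at hα; simp at hα⟩
    · have hne : f₀.roots.toFinset.Nonempty := by
        rw [Multiset.toFinset_nonempty]
        exact hr0
      set T := f₀.roots.toFinset.image (fun α => -α.re) with hT
      have hTne : T.Nonempty := hne.image _
      refine ⟨T.min' hTne, ?_, ?_⟩
      · obtain ⟨α, hα, hval⟩ := Finset.mem_image.mp (T.min'_mem hTne)
        rw [← hval]
        have := (hroots₀ α (Multiset.mem_toFinset.mp hα)).2
        linarith
      · intro α hα
        have hmem : -α.re ∈ T := Finset.mem_image_of_mem _ (Multiset.mem_toFinset.mpr hα)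
        have := T.min'_le _ hmem
        linarith
  set c := min δ₀ 1 with hc
  have hcpos : 0 < c := lt_min hδ₀pos one_pos
  have hc1 : c ≤ 1 := min_le_right _ _
  set Lstar := ‖f₀.leadingCoeff‖ * c ^ D with hLstar
  have hLstarpos : 0 < Lstar := by
    apply mul_pos (norm_pos_iff.mpr hlc₀)
    positivity
  by_contra hcon
  push_neg at hcon
  -- extract a bad sequence
  have hbad : ∀ N : ℕ, ∃ ε : ℝ, (0 < ε ∧ ε < 1/(N+1)) ∧
      ∃ β : ℂ, (Qx p z i j ((x₀:ℂ) + (ε:ℂ) * Complex.I)).eval β = 0 ∧ 0 < β.re := by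
    intro N
    obtain ⟨ε, hε1, hε2, β, hβ1, hβ2⟩ := hcon (1/(N+1)) (by positivity)
    exact ⟨ε, ⟨hε1, hε2⟩, β, hβ1, by linarith [hβ2]⟩
  choose eN heN βN hβN using hbad
  set xc : ℕ → ℂ := fun N => (x₀:ℂ) + ((eN N : ℝ):ℂ) * Complex.I with hxc
  have heN0 : Tendsto eN atTop (nhds 0) := by
    have h1 : Tendsto (fun N : ℕ => 1/((N:ℝ)+1)) atTop (nhds 0) := tendsto_one_div_add_atTop_nhds_zero_nat
    have h2 : Tendsto (fun _ : ℕ => (0:ℝ)) atTop (nhds 0) := tendsto_const_nhds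
    exact tendsto_of_tendsto_of_tendsto_of_le_of_le h2 h1
      (fun N => le_of_lt (heN N).1) (fun N => le_of_lt (heN N).2)
  have hxc0 : Tendsto xc atTop (nhds (x₀:ℂ)) := by
    rw [hxc]
    have h1 : Tendsto (fun N => ((eN N : ℝ):ℂ)) atTop (nhds 0) := by
      rw [show ((0:ℂ)) = ((0:ℝ):ℂ) by simp]
      exact (Complex.continuous_ofReal.tendsto 0).comp heN0
    have := (tendsto_const_nhds (x := (x₀:ℂ)) (f := atTop)).add (h1.mul_const Complex.I)
    simpa using this
  -- coefficient convergence
  have hcoefftend : ∀ a : ℕ, Tendsto (fun N => (Qx p z i j (xc N)).coeff a) atTop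
      (nhds (f₀.coeff a)) := by
    intro a
    simp only [hcoeff, hf₀def]
    exact (((BQ p z i j).coeff a).continuous.tendsto _).comp hxc0
  set L₀ := ‖f₀.coeff D‖ with hL₀
  have hL₀pos : 0 < L₀ := norm_pos_iff.mpr hf₀D
  have hLN : ∀ᶠ N in atTop, L₀/2 < ‖(Qx p z i j (xc N)).coeff D‖ := by
    have h1 : Tendsto (fun N => ‖(Qx p z i j (xc N)).coeff D‖) atTop (nhds L₀) :=
      (continuous_norm.tendsto _).comp (hcoefftend D)
    exact h1.eventually (eventually_gt_nhds (by linarith))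
  set S₀ := ∑ a ∈ Finset.range D, ‖f₀.coeff a‖ with hS₀
  have hSN : ∀ᶠ N in atTop, (∑ a ∈ Finset.range D, ‖(Qx p z i j (xc N)).coeff a‖) < S₀ + 1 := by
    have h1 : Tendsto (fun N => ∑ a ∈ Finset.range D, ‖(Qx p z i j (xc N)).coeff a‖) atTop
        (nhds S₀) := by
      apply tendsto_finset_sum
      intro a _
      exact (continuous_norm.tendsto _).comp (hcoefftend a)
    exact h1.eventually (eventually_lt_nhds (by linarith))
  set M := 1 + (S₀ + 1)/(L₀/2) with hM
  have hS₀nonneg : 0 ≤ S₀ := Finset.sum_nonneg (fun _ _ => norm_nonneg _)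
  have hM1 : 1 ≤ M := by
    have h9 : (0:ℝ) ≤ (S₀+1)/(L₀/2) := div_nonneg (by linarith) (by linarith)
    rw [hM]
    linarith
  -- error term convergence
  set EN : ℕ → ℝ := fun N => ∑ a ∈ Finset.range (D+1),
    ‖f₀.coeff a - (Qx p z i j (xc N)).coeff a‖ * M ^ a with hEN
  have hENtend : Tendsto EN atTop (nhds 0) := by
    have h1 : ∀ a : ℕ, Tendsto (fun N => ‖f₀.coeff a - (Qx p z i j (xc N)).coeff a‖ * M ^ a)
        atTop (nhds 0) := by
      intro a
      have h2 : Tendsto (fun N => f₀.coeff a - (Qx p z i j (xc N)).coeff a) atTop (nhds 0) := by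
        have := (tendsto_const_nhds (x := f₀.coeff a) (f := atTop)).sub (hcoefftend a)
        simpa using this
      have h3 := ((continuous_norm.tendsto _).comp h2).mul_const (M ^ a)
      simpa using h3
    have h4 : Tendsto (fun N => ∑ a ∈ Finset.range (D+1),
        ‖f₀.coeff a - (Qx p z i j (xc N)).coeff a‖ * M ^ a) atTop (nhds 0) := by
      have := tendsto_finset_sum (Finset.range (D+1)) (fun a _ => h1 a)
      simpa using this
    exact h4
  have hENsmall : ∀ᶠ N in atTop, EN N < Lstar :=
    hENtend.eventually (eventually_lt_nhds hLstarpos)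
  -- pick a single good N
  obtain ⟨N, hN⟩ := ((hLN.and hSN).and hENsmall).exists
  obtain ⟨⟨hN1, hN2⟩, hN3⟩ := hN
  set fN := Qx p z i j (xc N) with hfN
  have hfND : fN.coeff D ≠ 0 := by
    intro h
    rw [h] at hN1
    simp at hN1
    linarith
  have hdegN : fN.natDegree = D := le_antisymm Polynomial.natDegree_map_le
    (Polynomial.le_natDegree_of_ne_zero hfND)
  have hfNne : fN ≠ 0 := fun h => hfND (by rw [h]; simp)
  have hβroot : fN.IsRoot (βN N) := (hβN N).1
  -- root bound
  have hβbound : ‖βN N‖ ≤ M := by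
    have h1 := rootBound fN hfNne hβroot
    rw [hdegN] at h1
    have h2 : (∑ a ∈ Finset.range D, ‖fN.coeff a‖) / ‖fN.leadingCoeff‖ ≤ (S₀+1)/(L₀/2) := by
      apply div_le_div₀ (by linarith) (le_of_lt hN2) (by linarith)
      rw [Polynomial.leadingCoeff, hdegN]
      exact le_of_lt hN1
    rw [hM]
    linarith
  -- lower bound for ‖f₀.eval (βN N)‖
  have hlower : Lstar ≤ ‖f₀.eval (βN N)‖ := by
    rw [hLstar]
    apply evalLowerBound f₀ (βN N) hcpos hc1 ?_ (le_of_eq hdeg₀)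
    intro α hα
    have h1 := hδ₀ α hα
    have h2 : δ₀ ≤ ((βN N) - α).re := by
      rw [Complex.sub_re]
      have := (hβN N).2
      linarith
    calc c ≤ δ₀ := min_le_left _ _
      _ ≤ |((βN N) - α).re| := le_trans h2 (le_abs_self _)
      _ ≤ ‖(βN N) - α‖ := by
          exact Complex.abs_re_le_norm _
  -- upper bound
  have hupper : ‖f₀.eval (βN N)‖ ≤ EN N := by
    have h0 : fN.eval (βN N) = 0 := hβroot
    have h1 : ‖f₀.eval (βN N)‖ = ‖f₀.eval (βN N) - fN.eval (βN N)‖ := by rw [h0, sub_zero]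
    rw [h1]
    have h2 := evalDiff f₀ fN (N := D+1) (by rw [hdeg₀]; omega) (by rw [hdegN]; omega) (βN N)
    refine le_trans h2 ?_
    apply Finset.sum_le_sum
    intro a _
    apply mul_le_mul_of_nonneg_left ?_ (norm_nonneg _)
    exact pow_le_pow_left₀ (norm_nonneg _) hβbound a
  linarith [lt_of_le_of_lt (le_trans hlower hupper) hN3]

lemma goodDerivSign (hp : RealStable p) (hz : AboveRoots p z) (x₀ : ℝ) (hx₀ : 0 ≤ x₀)
    (hgood : ((BQ p z i j).leadingCoeff).eval (x₀ : ℂ) ≠ 0) :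
    (d1 p z i j (x₀:ℂ)).re ≤ 0 ∧ (d2 p z i j (x₀:ℂ)).re ≤ 0 := by
  have hFval : Fc p z i (x₀:ℂ)
      = ((MvPolynomial.eval (fun k => z k + (if k = i then x₀ else 0)) p : ℝ) : ℂ) := by
    simp only [Fc]
    exact hUreal z i x₀ p
  have hFpos : 0 < MvPolynomial.eval (fun k => z k + (if k = i then x₀ else 0)) p := by
    have hv : ∀ k, 0 ≤ (if k = i then x₀ else 0) := by
      intro k; by_cases hk : k = i <;> simp [hk, hx₀]
    have := hz _ hv
    rwa [show (z + fun k => (if k = i then x₀ else 0))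
      = (fun k => z k + (if k = i then x₀ else 0)) from rfl] at this
  have hFne : Fc p z i (x₀:ℂ) ≠ 0 := by
    rw [hFval]
    exact Complex.ofReal_ne_zero.mpr (ne_of_gt hFpos)
  constructor
  · exact (pickDeriv (s1 p z i j) x₀ (d1 p z i j (x₀:ℂ)) (hD1 p z i j _ hFne)
      (hs1real p z i j) ⟨1, one_pos, fun ε hε _ => imS1nonpos p z i j hp hz x₀ hx₀ ε hε⟩).2
  · obtain ⟨δ, hδpos, hδ⟩ := eventuallyRe p z i j hp hz x₀ hx₀ hgood
    exact (pickDeriv (s2 p z i j) x₀ (d2 p z i j (x₀:ℂ)) (hD2 p z i j _ hFne)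
      (hs2real p z i j)
      ⟨δ, hδpos, fun ε hε1 hε2 => imS2nonpos p z i j hp hz x₀ hx₀ ε hε1 (hδ ε hε1 hε2)⟩).2

lemma master (hp : RealStable p) (hz : AboveRoots p z) :
    dPhi p i j z ≤ 0 ∧ 2 * Phi p j z * dPhi p i j z ≤ dPsi p i j z := by
  classical
  have hP : 0 < MvPolynomial.eval z p := by
    have := hz 0 (fun _ => le_rfl)
    simpa using this
  have hPne : MvPolynomial.eval z p ≠ 0 := ne_of_gt hP
  have hF0 : Fc p z i (0:ℂ) = ((MvPolynomial.eval z p : ℝ) : ℂ) := by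
    simp only [Fc]
    exact hval0 z i p
  have hF0ne : Fc p z i (0:ℂ) ≠ 0 := by
    rw [hF0]
    exact Complex.ofReal_ne_zero.mpr hPne
  have hBQne : BQ p z i j ≠ 0 := by
    intro h
    apply hF0ne
    rw [← hQev0 p z i j 0]
    simp only [Qx, h]
    simp
  have hlcne : (BQ p z i j).leadingCoeff ≠ 0 := Polynomial.leadingCoeff_ne_zero.mpr hBQne
  have hgp : ∀ N : ℕ, ∃ x : ℝ, 0 < x ∧ x < 1/(N+1) ∧
      ((BQ p z i j).leadingCoeff).eval (x:ℂ) ≠ 0 := by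
    intro N
    exact goodPoint _ hlcne _ (by positivity)
  choose xN hx1 hx2 hx3 using hgp
  have hxN0 : Tendsto xN atTop (nhds 0) := by
    have h1 : Tendsto (fun N : ℕ => 1/((N:ℝ)+1)) atTop (nhds 0) := tendsto_one_div_add_atTop_nhds_zero_nat
    exact tendsto_of_tendsto_of_tendsto_of_le_of_le tendsto_const_nhds h1
      (fun N => le_of_lt (hx1 N)) (fun N => le_of_lt (hx2 N))
  have hxNc : Tendsto (fun N => ((xN N : ℝ) : ℂ)) atTop (nhds 0) := by
    rw [show ((0:ℂ)) = ((0:ℝ):ℂ) by simp]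
    exact (Complex.continuous_ofReal.tendsto 0).comp hxN0
  have hsign : ∀ N, (d1 p z i j (xN N : ℂ)).re ≤ 0 ∧ (d2 p z i j (xN N : ℂ)).re ≤ 0 :=
    fun N => goodDerivSign p z i j hp hz (xN N) (le_of_lt (hx1 N)) (hx3 N)
  -- continuity of d1 and d2 at 0
  have hc : ∀ q : MvPolynomial (Fin m) ℝ,
      ContinuousAt (fun x : ℂ => MvPolynomial.aeval (uln z i x) q) 0 :=
    fun q => (contAux z i q).continuousAt
  have hcont1 : ContinuousAt (d1 p z i j) 0 := by
    unfold d1 Fc Gc Fd Gd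
    apply ContinuousAt.div
    · exact ((hc _).mul (hc _)).sub ((hc _).mul (hc _))
    · exact (hc _).pow 2
    · apply pow_ne_zero
      exact hF0ne
  have hcont2 : ContinuousAt (d2 p z i j) 0 := by
    unfold d2 Fc Gc Hc Fd Gd Hd
    apply ContinuousAt.div
    · apply ContinuousAt.sub
      · apply ContinuousAt.mul
        · apply ContinuousAt.sub
          · apply ContinuousAt.sub
            · exact (continuousAt_const.mul (hc _)).mul (hc _)
            · exact (hc _).mul (hc _)
          · exact (hc _).mul (hc _)
        · exact (hc _).pow 2
      · apply ContinuousAt.mul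
        · exact ((hc _).pow 2).sub ((hc _).mul (hc _))
        · exact (continuousAt_const.mul (hc _)).mul (hc _)
    · exact ((hc _).pow 2).pow 2
    · apply pow_ne_zero
      apply pow_ne_zero
      exact hF0ne
  have hlim1 : Tendsto (fun N => (d1 p z i j ((xN N : ℝ):ℂ)).re) atTop (nhds ((d1 p z i j 0).re)) :=
    (Complex.continuous_re.tendsto _).comp (hcont1.tendsto.comp hxNc)
  have hlim2 : Tendsto (fun N => (d2 p z i j ((xN N : ℝ):ℂ)).re) atTop (nhds ((d2 p z i j 0).re)) :=
    (Complex.continuous_re.tendsto _).comp (hcont2.tendsto.comp hxNc)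
  have hd1le : (d1 p z i j 0).re ≤ 0 :=
    le_of_tendsto hlim1 (Filter.Eventually.of_forall (fun N => (hsign N).1))
  have hd2le : (d2 p z i j 0).re ≤ 0 :=
    le_of_tendsto hlim2 (Filter.Eventually.of_forall (fun N => (hsign N).2))
  -- compute the values at 0
  set P := MvPolynomial.eval z p with hPdef
  set Pi' := MvPolynomial.eval z (MvPolynomial.pderiv i p) with hPidef
  set Pj' := MvPolynomial.eval z (MvPolynomial.pderiv j p) with hPjdef
  set Pij := MvPolynomial.eval z (MvPolynomial.pderiv i (MvPolynomial.pderiv j p)) with hPijdef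
  set Pjj := MvPolynomial.eval z (MvPolynomial.pderiv j (MvPolynomial.pderiv j p)) with hPjjdef
  set Pijj := MvPolynomial.eval z
    (MvPolynomial.pderiv i (MvPolynomial.pderiv j (MvPolynomial.pderiv j p))) with hPijjdef
  have hv1 : d1 p z i j 0 = (((Pij * P - Pj' * Pi') / P^2 : ℝ) : ℂ) := by
    simp only [d1, Fc, Gc, Fd, Gd]
    rw [hval0, hval0, hval0, hval0]
    push_cast
    ring
  have hv2 : d2 p z i j 0 = ((((2*Pj'*Pij - Pi'*Pjj - P*Pijj) * P^2
      - (Pj'^2 - P*Pjj) * (2*P*Pi')) / (P^2)^2 : ℝ) : ℂ) := by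
    simp only [d2, Fc, Gc, Hc, Fd, Gd, Hd]
    rw [hval0, hval0, hval0, hval0, hval0, hval0]
    push_cast
    ring
  rw [hv1] at hd1le
  rw [hv2] at hd2le
  rw [Complex.ofReal_re] at hd1le hd2le
  constructor
  · simp only [dPhi, ← hPdef, ← hPidef, ← hPjdef, ← hPijdef]
    exact hd1le
  · have key : dPsi p i j z - 2 * Phi p j z * dPhi p i j z
        = -(((2*Pj'*Pij - Pi'*Pjj - P*Pijj) * P^2 - (Pj'^2 - P*Pjj) * (2*P*Pi')) / (P^2)^2) := by
      simp only [dPsi, dPhi, Phi, ← hPdef, ← hPidef, ← hPjdef, ← hPijdef, ← hPjjdef, ← hPijjdef]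
      field_simp
      ring
    linarith [key, hd2le]

end Master

end KS

/-- If `p` is real stable and `z` is above all roots of `p`, then for all `i, j`:
`∂_{z_i} Ψ^j_p(z) ≥ 2·Φ^j_p(z)·∂_{z_i} Φ^j_p(z)`; moreover `∂_{z_i} Φ^j_p(z) ≤ 0`, so
whenever `∂_{z_i} Φ^j_p(z) ≠ 0` one has
`(∂_{z_i} Ψ^j_p(z)) / (∂_{z_i} Φ^j_p(z)) ≤ 2·Φ^j_p(z)`. -/

theorem stmt18 {m : ℕ} (p : MvPolynomial (Fin m) ℝ) (hp : RealStable p)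
    (z : Fin m → ℝ) (hz : AboveRoots p z) :
    ∀ i j : Fin m,
      2 * Phi p j z * dPhi p i j z ≤ dPsi p i j z ∧
      dPhi p i j z ≤ 0 ∧
      (dPhi p i j z ≠ 0 → dPsi p i j z / dPhi p i j z ≤ 2 * Phi p j z) := by
  intro i j
  obtain ⟨h1, h2⟩ := KS.master p z i j hp hz
  refine ⟨h2, h1, ?_⟩
  intro hne
  have hlt : dPhi p i j z < 0 := lt_of_le_of_ne h1 hne
  rw [div_le_iff_of_neg hlt]
  linarith
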